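/- arXiv:2312.09914 — 10 statements merged into one kernel-verified Lean document; each statement's English description precedes it below -/
import Mathlib

section
/- Let (W,+) be a semigroup, A ⊆ W a two-sided ideal of (W,+), and e an idempotent of W with e ∉ A. Then H(e) = W(e)\A if and only if W(e)\A, equipped with the operation +, is a group (i.e., W(e)\A is closed under +, contains a two-sided identity element, and every element of W(e)\A has an inverse with respect to that identity). -/
open Pointwise

/-- Principal left ideal W_L(u) = (W + {u}) ∪ {u}. -/
def WLset {W : Type*} [AddSemigroup W] (u : W) : Set W :=
  ((Set.univ : Set W) + ({u} : Set W)) ∪ {u}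

/-- Principal right ideal W_R(u) = ({u} + W) ∪ {u}. -/
def WRset {W : Type*} [AddSemigroup W] (u : W) : Set W :=
  (({u} : Set W) + (Set.univ : Set W)) ∪ {u}

/-- Principal two-sided ideal W(u) = (W_L(u) + W) ∪ W_L(u). -/
def WIset {W : Type*} [AddSemigroup W] (u : W) : Set W :=
  (WLset u + (Set.univ : Set W)) ∪ WLset u

/-- Green L-class. -/
def Lclass {W : Type*} [AddSemigroup W] (u : W) : Set W := {v | WLset u = WLset v}

/-- Green R-class. -/
def Rclass {W : Type*} [AddSemigroup W] (u : W) : Set W := {v | WRset u = WRset v}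

/-- Green H-class. -/
def Hclass {W : Type*} [AddSemigroup W] (u : W) : Set W :=
  {v | WLset u = WLset v ∧ WRset u = WRset v}

def IsLeftIdealSG {W : Type*} [AddSemigroup W] (A : Set W) : Prop :=
  (Set.univ : Set W) + A ⊆ A

def IsRightIdealSG {W : Type*} [AddSemigroup W] (A : Set W) : Prop :=
  A + (Set.univ : Set W) ⊆ A

def IsIdealSG {W : Type*} [AddSemigroup W] (A : Set W) : Prop :=
  IsLeftIdealSG A ∧ IsRightIdealSG A

/-- The set E(W) of idempotents. -/
def Eset (W : Type*) [AddSemigroup W] : Set W := {e | e + e = e}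

/-- The Rees order: f ≤_H e iff e + f = f + e = f. -/
def ReesLE {W : Type*} [AddSemigroup W] (f e : W) : Prop := e + f = f ∧ f + e = f

/-- E^≤(e) = {f ∈ E(W) | f ≤_H e}. -/
def Ele {W : Type*} [AddSemigroup W] (e : W) : Set W := {f ∈ Eset W | ReesLE f e}

/-- E^lin(W): idempotents α such that ≤_H is a total order on E^≤(α). -/
def Elin (W : Type*) [AddSemigroup W] : Set W :=
  {α ∈ Eset W | ∀ f ∈ Ele α, ∀ g ∈ Ele α, ReesLE f g ∨ ReesLE g f}

def Afin (W : Type*) [AddSemigroup W] : Set W :=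
  {α ∈ Elin W | (Ele α).Finite ∧ ∀ w ∉ Ele α, w + α = α ∧ α + w = α}

/-- The set A(W) of quasi-absorbing elements. -/
def AW (W : Type*) [AddSemigroup W] : Set W :=
  {α ∈ Elin W | ∀ w ∉ Ele α, w + α = α ∧ α + w = α}

/-- Ā_n = ⋃_{i=1}^n A_i. -/
def Abar (W : Type*) [AddSemigroup W] : ℕ → Set W
  | 0 => ∅
  | n + 1 => Abar W n ∪ {α | α ∉ Abar W n ∧ ∀ w ∉ Abar W n, w + α = α ∧ α + w = α}

/-- The sets A_n from the stepwise construction. -/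
def Astep (W : Type*) [AddSemigroup W] : ℕ → Set W
  | 0 => ∅
  | n + 1 => {α | α ∉ Abar W n ∧ ∀ w ∉ Abar W n, w + α = α ∧ α + w = α}

/-- The set A_s(W) of stepwise quasi-absorbing elements. -/
def As (W : Type*) [AddSemigroup W] : Set W := {α | ∃ n, α ∈ Astep W n}

/-- The set P(A) of A-primitive idempotents. -/
def Pset {W : Type*} [AddSemigroup W] (A : Set W) : Set W :=
  {e | e ∈ Eset W \ A ∧ ∀ f ∈ Eset W, ReesLE f e → f = e ∨ f ∈ A}

/-- G ⊆ W is a group under +: closed, with a two-sided identity and inverses. -/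
def IsGroupOn {W : Type*} [AddSemigroup W] (G : Set W) : Prop :=
  (∀ a ∈ G, ∀ b ∈ G, a + b ∈ G) ∧
  ∃ e ∈ G, (∀ a ∈ G, a + e = a ∧ e + a = a) ∧
    ∀ a ∈ G, ∃ b ∈ G, a + b = e ∧ b + a = e

/-- D is an A-minimal ideal. -/
def IsMinimalIdealRel {W : Type*} [AddSemigroup W] (A D : Set W) : Prop :=
  IsIdealSG D ∧ ¬ D ⊆ A ∧ ∀ E : Set W, IsIdealSG E → E ⊂ D → E ⊆ A

/-- D is an ideal of the subsemigroup (V,+). -/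
def IsIdealIn {W : Type*} [AddSemigroup W] (V D : Set W) : Prop :=
  D ⊆ V ∧ V + D ⊆ D ∧ D + V ⊆ D

/-- The subsemigroup (V,+) is A-simple. -/
def IsSimpleRel {W : Type*} [AddSemigroup W] (V A : Set W) : Prop :=
  A ⊂ V ∧ ∀ D : Set W, IsIdealIn V D → D = V ∨ D ⊆ A

/-- A bottleneck ideal. -/
def IsBottleneck {W : Type*} [AddSemigroup W] (A : Set W) : Prop :=
  IsIdealSG A ∧ ∀ D : Set W, IsIdealSG D → D ⊆ A ∨ A ⊆ D

section Helpers

variable {W : Type*} [AddSemigroup W]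

lemma mem_WL {u x : W} : x ∈ WLset u ↔ (∃ w, w + u = x) ∨ x = u := by
  simp [WLset, Set.mem_add, or_comm]

lemma mem_WR {u x : W} : x ∈ WRset u ↔ (∃ w, u + w = x) ∨ x = u := by
  simp [WRset, Set.mem_add, or_comm]

lemma mem_WI_idem {e x : W} (he : e + e = e) :
    x ∈ WIset e ↔ ∃ a b, a + e + b = x := by
  constructor
  · rintro (h | h)
    · obtain ⟨y, hy, c, -, rfl⟩ := Set.mem_add.mp h
      rcases mem_WL.mp hy with ⟨w, hw⟩ | heq
      · exact ⟨w, c, by rw [hw]⟩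
      · exact ⟨e, c, by rw [he, ← heq]⟩
    · rcases mem_WL.mp h with ⟨w, hw⟩ | heq
      · exact ⟨w, e, by rw [add_assoc, he, hw]⟩
      · exact ⟨e, e, by rw [he, he, ← heq]⟩
  · rintro ⟨a, b, rfl⟩
    exact Or.inl (Set.add_mem_add (mem_WL.mpr (Or.inl ⟨a, rfl⟩)) (Set.mem_univ b))

end Helpers

theorem H_eq_W_diff_A_iff_group {W : Type*} [AddSemigroup W] (A : Set W)
    (hA : IsIdealSG A) (e : W) (he : e ∈ Eset W) (heA : e ∉ A) :
    Hclass e = WIset e \ A ↔ IsGroupOn (WIset e \ A) := by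
  have hee : e + e = e := he
  have heG : e ∈ WIset e \ A :=
    ⟨(mem_WI_idem hee).mpr ⟨e, e, by rw [hee, hee]⟩, heA⟩
  have hHsub : Hclass e ⊆ WIset e \ A := by
    rintro v ⟨hL, hR⟩
    have hvL : v ∈ WLset e := hL ▸ mem_WL.mpr (Or.inr rfl)
    have hvA : v ∉ A := by
      intro hvA
      have heL : e ∈ WLset v := hL ▸ mem_WL.mpr (Or.inr rfl)
      rcases mem_WL.mp heL with ⟨w, hw⟩ | hev
      · exact heA (hw ▸ hA.1 (Set.add_mem_add (Set.mem_univ w) hvA))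
      · exact heA (hev ▸ hvA)
    refine ⟨?_, hvA⟩
    rcases mem_WL.mp hvL with ⟨w, hw⟩ | heq
    · exact (mem_WI_idem hee).mpr ⟨w, e, by rw [add_assoc, hee, hw]⟩
    · exact heq ▸ heG.1
  have hid : ∀ v ∈ Hclass e, v + e = v ∧ e + v = v := by
    rintro v ⟨hL, hR⟩
    constructor
    · have hvL : v ∈ WLset e := hL ▸ mem_WL.mpr (Or.inr rfl)
      rcases mem_WL.mp hvL with ⟨w, hw⟩ | heq
      · rw [← hw, add_assoc, hee]
      · rw [heq, hee]
    · have hvR : v ∈ WRset e := hR ▸ mem_WR.mpr (Or.inr rfl)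
      rcases mem_WR.mp hvR with ⟨w, hw⟩ | heq
      · rw [← hw, ← add_assoc, hee]
      · rw [heq, hee]
  constructor
  · -- H(e) = G → group
    intro hHG
    have hinv : ∀ v ∈ WIset e \ A, ∃ b ∈ WIset e \ A, v + b = e ∧ b + v = e := by
      intro v hv
      have hvH : v ∈ Hclass e := hHG ▸ hv
      obtain ⟨hL, hR⟩ := hvH
      have hve : v + e = v := (hid v ⟨hL, hR⟩).1
      have hev : e + v = v := (hid v ⟨hL, hR⟩).2
      have heLv : e ∈ WLset v := hL ▸ mem_WL.mpr (Or.inr rfl)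
      have heRv : e ∈ WRset v := hR ▸ mem_WR.mpr (Or.inr rfl)
      rcases mem_WL.mp heLv with ⟨a, ha⟩ | hev'
      · rcases mem_WR.mp heRv with ⟨c, hc⟩ | hev''
        · have hbvc : ((e + a) + e) + v = e := by
            rw [add_assoc, hev, add_assoc, ha, hee]
          have hb : (e + a) + e = e + c := by
            calc (e + a) + e = (e + a) + (v + c) := by rw [hc]
              _ = ((e + a) + v) + c := (add_assoc _ _ _).symm
              _ = (e + (a + v)) + c := by rw [add_assoc e a v]
              _ = e + c := by rw [ha, hee]
          refine ⟨(e + a) + e,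
            ⟨(mem_WI_idem hee).mpr ⟨e + a, e, by rw [add_assoc, hee]⟩, ?_⟩, ?_, hbvc⟩
          · intro hbA
            exact heA (hbvc ▸ hA.2 (Set.add_mem_add hbA (Set.mem_univ v)))
          · rw [hb, ← add_assoc, hve, hc]
        · exact ⟨e, heG, by rw [← hev'']; exact hee, by rw [← hev'']; exact hee⟩
      · exact ⟨e, heG, by rw [← hev']; exact hee, by rw [← hev']; exact hee⟩
    refine ⟨?_, e, heG, fun a ha => hid a (hHG ▸ ha), hinv⟩
    intro a ha b hb
    obtain ⟨x, y, hxy⟩ := (mem_WI_idem hee).mp ha.1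
    refine ⟨(mem_WI_idem hee).mpr ⟨x, y + b, by rw [← add_assoc, hxy]⟩, ?_⟩
    intro habA
    obtain ⟨a', ha', haa', ha'a⟩ := hinv a ha
    obtain ⟨b', hb', hbb', hb'b⟩ := hinv b hb
    have h2 : (a' + (a + b)) + b' ∈ A :=
      hA.2 (Set.add_mem_add (hA.1 (Set.add_mem_add (Set.mem_univ a') habA)) (Set.mem_univ b'))
    have heb : e + b = b := (hid b (hHG ▸ hb)).2
    have heq : (a' + (a + b)) + b' = e := by
      rw [← add_assoc, ha'a, heb, hbb']
    exact heA (heq ▸ h2)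
  · -- group → H(e) = G
    rintro ⟨hcl, f, hfG, hfid, hfinv⟩
    have hfe : f = e := by
      obtain ⟨b, hbG, heb, hbe⟩ := hfinv e heG
      have h1 : e + f = e := (hfid e heG).1
      have h2 : e + f = f := by rw [← heb, ← add_assoc, hee]
      rw [← h2, h1]
    subst hfe
    apply Set.Subset.antisymm hHsub
    intro v hv
    obtain ⟨b, hbG, hvb, hbv⟩ := hfinv v hv
    have hve : v + f = v := (hfid v hv).1
    have hfv : f + v = v := (hfid v hv).2
    constructor
    · ext x
      rw [mem_WL, mem_WL]
      constructor
      · rintro (⟨w, hw⟩ | hx)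
        · exact Or.inl ⟨w + b, by rw [add_assoc, hbv, hw]⟩
        · exact Or.inl ⟨b, by rw [hbv, ← hx]⟩
      · rintro (⟨w, hw⟩ | hx)
        · exact Or.inl ⟨w + v, by rw [add_assoc, hve, hw]⟩
        · exact Or.inl ⟨v, by rw [hve, ← hx]⟩
    · ext x
      rw [mem_WR, mem_WR]
      constructor
      · rintro (⟨w, hw⟩ | hx)
        · exact Or.inl ⟨b + w, by rw [← add_assoc, hvb, hw]⟩
        · exact Or.inl ⟨b, by rw [hvb, ← hx]⟩
      · rintro (⟨w, hw⟩ | hx)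
        · exact Or.inl ⟨v + w, by rw [← add_assoc, hfv, hw]⟩
        · exact Or.inl ⟨v, by rw [hfv, ← hx]⟩
end

section
/- Let (W,+) be a semigroup and β ∈ W. Then β ∈ A_fin(W) if and only if there exists α ∈ A_fin(W) with β ∈ E^≤(α). -/
open Pointwise

theorem Afin_char {W : Type*} [AddSemigroup W] (β : W) :
    β ∈ Afin W ↔ ∃ α ∈ Afin W, β ∈ Ele α := by
  constructor
  · intro hβ
    refine ⟨β, hβ, hβ.1.1, hβ.1.1, hβ.1.1⟩
  · rintro ⟨α, ⟨⟨hαE, hlin⟩, hfin, habs⟩, hβE, hβα⟩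
    have hsub : Ele β ⊆ Ele α := by
      rintro f ⟨hfE, hf1, hf2⟩
      refine ⟨hfE, ?_, ?_⟩
      · calc α + f = α + (β + f) := by rw [hf1]
          _ = (α + β) + f := (add_assoc _ _ _).symm
          _ = β + f := by rw [hβα.1]
          _ = f := hf1
      · calc f + α = (f + β) + α := by rw [hf2]
          _ = f + (β + α) := add_assoc _ _ _
          _ = f + β := by rw [hβα.2]
          _ = f := hf2
    have hβElin : β ∈ Elin W := ⟨hβE, fun f hf g hg => hlin f (hsub hf) g (hsub hg)⟩
    refine ⟨hβElin, hfin.subset hsub, ?_⟩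
    intro w hw
    by_cases hwα : w ∈ Ele α
    · rcases hlin β ⟨hβE, hβα⟩ w hwα with h | h
      · exact ⟨h.1, h.2⟩
      · exact absurd ⟨hwα.1, h⟩ hw
    · obtain ⟨h1, h2⟩ := habs w hwα
      constructor
      · calc w + β = w + (α + β) := by rw [hβα.1]
          _ = (w + α) + β := (add_assoc _ _ _).symm
          _ = α + β := by rw [h1]
          _ = β := hβα.1
      · calc β + w = (β + α) + w := by rw [hβα.2]
          _ = β + (α + w) := add_assoc _ _ _
          _ = β + α := by rw [h2]
          _ = β := hβα.2
end

section
/- Let (W,+) be a semigroup. If α, β ∈ A_fin(W), then α + β = β + α and α + β ∈ {α, β}. -/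
open Pointwise

theorem Afin_add {W : Type*} [AddSemigroup W] (α β : W)
    (hα : α ∈ Afin W) (hβ : β ∈ Afin W) :
    α + β = β + α ∧ (α + β = α ∨ α + β = β) := by
  by_cases h : β ∈ Ele α
  · obtain ⟨_, h1, h2⟩ := h
    exact ⟨h1.trans h2.symm, Or.inr h1⟩
  · obtain ⟨_, _, habs⟩ := hα
    obtain ⟨h1, h2⟩ := habs β h
    exact ⟨h2.trans h1.symm, Or.inl h2⟩
end

section
/- Let (W,+) be a semigroup. Then A_fin(W) is a (two-sided) ideal of (W,+), i.e., W + A_fin(W) ⊆ A_fin(W) and A_fin(W) + W ⊆ A_fin(W). -/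
open Pointwise

lemma Ele_trans {W : Type*} [AddSemigroup W] {α f g : W} (hf : ReesLE f α)
    (hg : ReesLE g f) : ReesLE g α := by
  obtain ⟨h1, h2⟩ := hf
  obtain ⟨h3, h4⟩ := hg
  constructor
  · calc α + g = α + (f + g) := by rw [h3]
      _ = (α + f) + g := by rw [add_assoc]
      _ = f + g := by rw [h1]
      _ = g := h3
  · calc g + α = (g + f) + α := by rw [h4]
      _ = g + (f + α) := by rw [add_assoc]
      _ = g + f := by rw [h2]
      _ = g := h4

lemma mem_Afin_of_mem_Ele {W : Type*} [AddSemigroup W] {α f : W}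
    (hα : α ∈ Afin W) (hf : f ∈ Ele α) : f ∈ Afin W := by
  obtain ⟨⟨hαE, hlin⟩, hfin, habs⟩ := hα
  obtain ⟨hfE, hfα⟩ := hf
  have hsub : Ele f ⊆ Ele α := by
    rintro g ⟨hgE, hgf⟩
    exact ⟨hgE, Ele_trans hfα hgf⟩
  refine ⟨⟨hfE, fun a ha b hb => hlin a (hsub ha) b (hsub hb)⟩,
    hfin.subset hsub, fun w hw => ?_⟩
  by_cases hwα : w ∈ Ele α
  · rcases hlin w hwα f ⟨hfE, hfα⟩ with hwf | hfw
    · exact absurd ⟨hwα.1, hwf⟩ hw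
    · exact ⟨hfw.1, hfw.2⟩
  · obtain ⟨h1, h2⟩ := habs w hwα
    constructor
    · calc w + f = w + (α + f) := by rw [hfα.1]
        _ = (w + α) + f := by rw [add_assoc]
        _ = α + f := by rw [h1]
        _ = f := hfα.1
    · calc f + w = (f + α) + w := by rw [hfα.2]
        _ = f + (α + w) := by rw [add_assoc]
        _ = f + α := by rw [h2]
        _ = f := hfα.2

theorem Afin_ideal {W : Type*} [AddSemigroup W] :
    IsIdealSG (Afin W) := by
  constructor
  · rintro x hx
    rw [Set.mem_add] at hx
    obtain ⟨w, -, α, hα, rfl⟩ := hx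
    by_cases hw : w ∈ Ele α
    · have : w + α = w := hw.2.2
      rw [this]
      exact mem_Afin_of_mem_Ele hα hw
    · rw [(hα.2.2 w hw).1]
      exact hα
  · rintro x hx
    rw [Set.mem_add] at hx
    obtain ⟨α, hα, w, -, rfl⟩ := hx
    by_cases hw : w ∈ Ele α
    · have : α + w = w := hw.2.1
      rw [this]
      exact mem_Afin_of_mem_Ele hα hw
    · rw [(hα.2.2 w hw).2]
      exact hα
end

section
/- Let (W,+) be a semigroup. Then A_fin(W) ⊆ W_L(u) ∩ W_R(u) for every u ∈ W\A_fin(W). -/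
open Pointwise

theorem Afin_subset_principal {W : Type*} [AddSemigroup W] (u : W) (hu : u ∉ Afin W) :
    Afin W ⊆ WLset u ∩ WRset u := by
  intro α hα
  obtain ⟨⟨hαE, hlin⟩, hfin, habs⟩ := hα
  by_cases hmem : u ∈ Ele α
  · exfalso
    apply hu
    obtain ⟨huE, h1, h2⟩ := hmem
    have hsub : Ele u ⊆ Ele α := by
      rintro f ⟨hfE, hf1, hf2⟩
      refine ⟨hfE, ?_, ?_⟩
      · calc α + f = α + (u + f) := by rw [hf1]
          _ = (α + u) + f := (add_assoc _ _ _).symm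
          _ = u + f := by rw [h1]
          _ = f := hf1
      · calc f + α = (f + u) + α := by rw [hf2]
          _ = f + (u + α) := add_assoc _ _ _
          _ = f + u := by rw [h2]
          _ = f := hf2
    refine ⟨⟨huE, fun f hf g hg => hlin f (hsub hf) g (hsub hg)⟩, hfin.subset hsub, ?_⟩
    intro w hw
    by_cases hwα : w ∈ Ele α
    · rcases hlin u ⟨huE, h1, h2⟩ w hwα with h | h
      · exact h
      · exact absurd ⟨hwα.1, h⟩ hw
    · obtain ⟨hw1, hw2⟩ := habs w hwα
      constructor
      · calc w + u = w + (α + u) := by rw [h1]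
          _ = (w + α) + u := (add_assoc _ _ _).symm
          _ = α + u := by rw [hw1]
          _ = u := h1
      · calc u + w = (u + α) + w := by rw [h2]
          _ = u + (α + w) := add_assoc _ _ _
          _ = u + α := by rw [hw2]
          _ = u := h2
  · obtain ⟨huα, hαu⟩ := habs u hmem
    constructor
    · exact Or.inl ⟨α, Set.mem_univ α, u, rfl, hαu⟩
    · exact Or.inl ⟨u, rfl, α, Set.mem_univ α, huα⟩
end

section
/- Let (W,+) be a semigroup. Then A_s(W) = A_fin(W), i.e., the set of stepwise quasi-absorbing elements equals A_fin(W). -/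
open Pointwise

section AuxAsAfin

variable {W : Type*} [AddSemigroup W]

lemma rees_refl {a : W} (h : a ∈ Eset W) : ReesLE a a := ⟨h, h⟩

lemma rees_trans {f g h : W} (h1 : ReesLE f g) (h2 : ReesLE g h) : ReesLE f h := by
  obtain ⟨a1, a2⟩ := h1
  obtain ⟨b1, b2⟩ := h2
  constructor
  · calc h + f = h + (g + f) := by rw [a1]
      _ = (h + g) + f := (add_assoc _ _ _).symm
      _ = g + f := by rw [b1]
      _ = f := a1
  · calc f + h = (f + g) + h := by rw [a2]
      _ = f + (g + h) := add_assoc _ _ _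
      _ = f + g := by rw [b2]
      _ = f := a2

lemma rees_antisymm {f g : W} (h1 : ReesLE f g) (h2 : ReesLE g f) : f = g :=
  h1.1.symm.trans h2.2

lemma mem_ele_self {a : W} (h : a ∈ Eset W) : a ∈ Ele a := ⟨h, rees_refl h⟩

lemma ele_subset_ele {a b : W} (hb : b ∈ Ele a) : Ele b ⊆ Ele a :=
  fun _ hf => ⟨hf.1, rees_trans hf.2 hb.2⟩

lemma abar_succ (n : ℕ) :
    Abar W (n + 1) = Abar W n ∪ Astep W (n + 1) := rfl

lemma abar_mono {m n : ℕ} (h : m ≤ n) : Abar W m ⊆ Abar W n := by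
  induction n with
  | zero => simp [Nat.le_zero.mp h]
  | succ k ih =>
    rcases Nat.lt_or_ge m (k + 1) with hlt | hge
    · exact (ih (Nat.lt_succ_iff.mp hlt)).trans (by rw [abar_succ]; exact Set.subset_union_left)
    · have : m = k + 1 := le_antisymm h hge
      subst this; exact Set.Subset.rfl

lemma mem_abar_iff {n : ℕ} {a : W} :
    a ∈ Abar W n ↔ ∃ i < n, a ∈ Astep W (i + 1) := by
  induction n with
  | zero => simp [Abar]
  | succ k ih =>
    rw [abar_succ]
    constructor
    · rintro (h | h)
      · obtain ⟨i, hi, hm⟩ := ih.mp h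
        exact ⟨i, Nat.lt_succ_of_lt hi, hm⟩
      · exact ⟨k, Nat.lt_succ_self k, h⟩
    · rintro ⟨i, hi, hm⟩
      rcases Nat.lt_or_ge i k with h' | h'
      · exact Or.inl (ih.mpr ⟨i, h', hm⟩)
      · have : i = k := le_antisymm (Nat.lt_succ_iff.mp hi) h'
        subst this; exact Or.inr hm

lemma astep_eq {n : ℕ} {a b : W} (ha : a ∈ Astep W (n + 1)) (hb : b ∈ Astep W (n + 1)) :
    a = b := by
  have h1 : b + a = a := (ha.2 b hb.1).1
  have h2 : b + a = b := (hb.2 a ha.1).2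
  exact h1.symm.trans h2

lemma astep_idem {n : ℕ} {a : W} (ha : a ∈ Astep W (n + 1)) : a + a = a :=
  (ha.2 a ha.1).1

lemma rees_of_steps {i j : ℕ} {f g : W} (hij : i ≤ j)
    (hf : f ∈ Astep W (i + 1)) (hg : g ∈ Astep W (j + 1)) : ReesLE f g := by
  have hgn : g ∉ Abar W i := fun h => hg.1 (abar_mono hij h)
  exact ⟨(hf.2 g hgn).1, (hf.2 g hgn).2⟩

lemma ele_of_astep {n : ℕ} {a : W} (ha : a ∈ Astep W (n + 1)) :
    Ele a = Abar W n ∪ {a} := by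
  ext f
  constructor
  · rintro ⟨hfE, hfa1, hfa2⟩
    by_cases hf : f ∈ Abar W n
    · exact Or.inl hf
    · have h := (ha.2 f hf).2
      exact Or.inr (hfa1.symm.trans h)
  · rintro (hf | hf)
    · obtain ⟨i, hi, hm⟩ := mem_abar_iff.mp hf
      have hr : ReesLE f a := rees_of_steps (Nat.lt_succ_iff.mp (Nat.lt_succ_of_lt hi)) hm ha
      exact ⟨astep_idem hm, hr⟩
    · rcases hf with rfl
      exact mem_ele_self (astep_idem ha)

lemma abar_finite (n : ℕ) : (Abar W n).Finite := by
  induction n with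
  | zero => simp [Abar]
  | succ k ih =>
    rw [abar_succ]
    exact ih.union (Set.Subsingleton.finite (s := Astep W (k + 1)) (fun a ha b hb => astep_eq ha hb))

lemma astep_mem_afin {n : ℕ} {a : W} (ha : a ∈ Astep W (n + 1)) : a ∈ Afin W := by
  have hEle : Ele a = Abar W n ∪ {a} := ele_of_astep ha
  have hidx : ∀ f ∈ Ele a, ∃ i ≤ n, f ∈ Astep W (i + 1) := by
    intro f hf
    rw [hEle] at hf
    rcases hf with hf | hf
    · obtain ⟨i, hi, hm⟩ := mem_abar_iff.mp hf
      exact ⟨i, Nat.le_of_lt hi, hm⟩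
    · rcases hf with rfl; exact ⟨n, le_rfl, ha⟩
  refine ⟨⟨astep_idem ha, ?_⟩, ?_, ?_⟩
  · intro f hf g hg
    obtain ⟨i, hi, hfm⟩ := hidx f hf
    obtain ⟨j, hj, hgm⟩ := hidx g hg
    rcases le_total i j with h | h
    · exact Or.inl (rees_of_steps h hfm hgm)
    · exact Or.inr (rees_of_steps h hgm hfm)
  · rw [hEle]; exact (abar_finite n).union (Set.finite_singleton a)
  · intro w hw
    rw [hEle] at hw
    exact ha.2 w (fun h => hw (Or.inl h))

lemma afin_of_mem_ele {a b : W} (ha : a ∈ Afin W) (hb : b ∈ Ele a) : b ∈ Afin W := by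
  obtain ⟨⟨haE, htot⟩, hfin, habs⟩ := ha
  refine ⟨⟨hb.1, ?_⟩, hfin.subset (ele_subset_ele hb), ?_⟩
  · intro f hf g hg
    exact htot f (ele_subset_ele hb hf) g (ele_subset_ele hb hg)
  · intro w hw
    by_cases hwa : w ∈ Ele a
    · rcases htot w hwa b hb with h | h
      · exact absurd ⟨hwa.1, h⟩ hw
      · exact ⟨h.1, h.2⟩
    · have h1 : w + a = a := (habs w hwa).1
      have h2 : a + w = a := (habs w hwa).2
      have hab : a + b = b := hb.2.1
      have hba : b + a = b := hb.2.2
      constructor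
      · calc w + b = w + (a + b) := by rw [hab]
          _ = (w + a) + b := (add_assoc _ _ _).symm
          _ = a + b := by rw [h1]
          _ = b := hab
      · calc b + w = (b + a) + w := by rw [hba]
          _ = b + (a + w) := add_assoc _ _ _
          _ = b + a := by rw [h2]
          _ = b := hba

lemma afin_main (n : ℕ) : ∀ a ∈ Afin W, (Ele a).ncard = n + 1 →
    Abar W n = Ele a \ {a} ∧ a ∈ Astep W (n + 1) := by
  induction n using Nat.strong_induction_on with
  | _ n IH =>
    intro a ha hcard
    obtain ⟨⟨haE, htot⟩, hfin, habs⟩ := ha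
    have haself : a ∈ Ele a := mem_ele_self haE
    by_cases hS : (Ele a \ {a}) = ∅
    · -- Ele a = {a}, so n = 0
      have hEle : Ele a = {a} := by
        apply Set.eq_singleton_iff_unique_mem.mpr
        refine ⟨haself, fun x hx => ?_⟩
        by_contra hne
        exact (Set.eq_empty_iff_forall_notMem.mp hS x) ⟨hx, hne⟩
      have hn : n = 0 := by
        have : (Ele a).ncard = 1 := by rw [hEle]; simp
        omega
      subst hn
      refine ⟨by simp [Abar, hS.symm], ?_, ?_⟩
      · simp [Abar]
      · intro w _
        by_cases hw : w = a
        · subst hw; exact ⟨haE, haE⟩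
        · have : w ∉ Ele a := by rw [hEle]; exact hw
          exact habs w this
    · have hSne : (Ele a \ {a}).Nonempty := Set.nonempty_iff_ne_empty.mpr hS
      have hSfin : (Ele a \ {a}).Finite := hfin.diff
      obtain ⟨b, hbS, hbmax⟩ :=
        Set.Finite.exists_maximalFor (fun c => (Ele c).ncard) _ hSfin hSne
      have hbEle : b ∈ Ele a := hbS.1
      have hbne : b ≠ a := hbS.2
      -- Ele b = Ele a \ {a}
      have hEleb : Ele b = Ele a \ {a} := by
        apply Set.Subset.antisymm
        · intro f hf
          refine ⟨ele_subset_ele hbEle hf, ?_⟩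
          intro hfa
          rcases hfa with rfl
          exact hbne (rees_antisymm hbEle.2 hf.2)
        · intro f hfS
          have hfEle : f ∈ Ele a := hfS.1
          rcases htot f hfEle b hbEle with h | h
          · exact ⟨hfEle.1, h⟩
          · have hbf : b ∈ Ele f := ⟨hbEle.1, h⟩
            have hsub : Ele b ⊆ Ele f := ele_subset_ele hbf
            have hffin : (Ele f).Finite := hfin.subset (ele_subset_ele hfEle)
            have hle : (Ele b).ncard ≤ (Ele f).ncard := Set.ncard_le_ncard hsub hffin
            have heq : (Ele b).ncard = (Ele f).ncard := le_antisymm hle (hbmax hfS hle)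
            have : Ele b = Ele f :=
              Set.eq_of_subset_of_ncard_le hsub heq.ge hffin
            rw [this]
            exact mem_ele_self hfEle.1
      have hb_afin : b ∈ Afin W := afin_of_mem_ele ⟨⟨haE, htot⟩, hfin, habs⟩ hbEle
      have hcardb : (Ele b).ncard = n := by
        rw [hEleb, Set.ncard_diff_singleton_of_mem haself, hcard]; omega
      have hnpos : 1 ≤ n := by
        have : 0 < (Ele b).ncard :=
          (Set.ncard_pos (hs := hfin.subset (ele_subset_ele hbEle))).mpr ⟨b, mem_ele_self hbEle.1⟩
        omega
      obtain ⟨m, rfl⟩ : ∃ m, n = m + 1 := ⟨n - 1, by omega⟩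
      obtain ⟨hAbar, hbstep⟩ := IH m (by omega) b hb_afin (by omega)
      have hstep_eq : Astep W (m + 1) = {b} := by
        apply Set.eq_singleton_iff_unique_mem.mpr
        exact ⟨hbstep, fun x hx => astep_eq hx hbstep⟩
      have hAbarn : Abar W (m + 1) = Ele a \ {a} := by
        rw [abar_succ, hAbar, hstep_eq, ← hEleb]
        rw [Set.diff_union_self, Set.union_eq_self_of_subset_right
          (Set.singleton_subset_iff.mpr (mem_ele_self hbEle.1))]
      refine ⟨hAbarn, ?_, ?_⟩
      · rw [hAbarn]; exact fun h => h.2 rfl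
      · intro w hw
        rw [hAbarn] at hw
        by_cases hwa : w ∈ Ele a
        · have : w = a := by
            by_contra hne
            exact hw ⟨hwa, hne⟩
          subst this
          exact ⟨haE, haE⟩
        · exact habs w hwa

end AuxAsAfin

theorem As_eq_Afin {W : Type*} [AddSemigroup W] :
    As W = Afin W := by
  ext a
  constructor
  · rintro ⟨n, hn⟩
    match n with
    | 0 => exact absurd hn (by simp [Astep])
    | k + 1 => exact astep_mem_afin hn
  · intro ha
    have hfin : (Ele a).Finite := ha.2.1
    have hne : (Ele a).Nonempty := ⟨a, mem_ele_self ha.1.1⟩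
    have hpos : 0 < (Ele a).ncard := (Set.ncard_pos hfin).mpr hne
    obtain ⟨k, hk⟩ : ∃ k, (Ele a).ncard = k + 1 := ⟨(Ele a).ncard - 1, by omega⟩
    exact ⟨k + 1, (afin_main k a ha hk).2⟩
end

section
/- Let (W,+) be a semigroup, A ⊆ W an ideal of (W,+), and e ∈ P(A). Then H(e) = (W_L(e) ∩ W_R(e)) \ ⋃_{f ∈ P(A)} ((W_L(f) ∩ W_R(f)) \ H(f)). -/
open Pointwise

lemma mem_WLset {W : Type*} [AddSemigroup W] {v u : W} :
    v ∈ WLset u ↔ (∃ w, w + u = v) ∨ v = u := by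
  simp [WLset, Set.mem_add, or_comm]

lemma mem_WRset {W : Type*} [AddSemigroup W] {v u : W} :
    v ∈ WRset u ↔ (∃ w, u + w = v) ∨ v = u := by
  simp [WRset, Set.mem_add, or_comm]

lemma self_mem_WLset {W : Type*} [AddSemigroup W] (u : W) : u ∈ WLset u :=
  mem_WLset.2 (Or.inr rfl)

lemma self_mem_WRset {W : Type*} [AddSemigroup W] (u : W) : u ∈ WRset u :=
  mem_WRset.2 (Or.inr rfl)

lemma WLset_subset {W : Type*} [AddSemigroup W] {v u : W} (h : v ∈ WLset u) :
    WLset v ⊆ WLset u := by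
  rcases mem_WLset.1 h with ⟨w, rfl⟩ | rfl
  · intro x hx
    rcases mem_WLset.1 hx with ⟨y, rfl⟩ | rfl
    · exact mem_WLset.2 (Or.inl ⟨y + w, add_assoc y w u⟩)
    · exact mem_WLset.2 (Or.inl ⟨w, rfl⟩)
  · exact fun x hx => hx

lemma WRset_subset {W : Type*} [AddSemigroup W] {v u : W} (h : v ∈ WRset u) :
    WRset v ⊆ WRset u := by
  rcases mem_WRset.1 h with ⟨w, rfl⟩ | rfl
  · intro x hx
    rcases mem_WRset.1 hx with ⟨y, rfl⟩ | rfl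
    · exact mem_WRset.2 (Or.inl ⟨w + y, (add_assoc u w y).symm⟩)
    · exact mem_WRset.2 (Or.inl ⟨w, rfl⟩)
  · exact fun x hx => hx

lemma primitive_eq {W : Type*} [AddSemigroup W] {A : Set W} {e f : W}
    (he : e ∈ Pset A) (hf : f ∈ Pset A) (hL : e ∈ WLset f) (hR : e ∈ WRset f) :
    e = f := by
  rcases mem_WLset.1 hL with ⟨x, hx⟩ | h
  · rcases mem_WRset.1 hR with ⟨y, hy⟩ | h
    · have hfid : f + f = f := hf.1.1
      have h1 : e + f = e := by rw [← hx, add_assoc, hfid]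
      have h2 : f + e = e := by rw [← hy, ← add_assoc, hfid]
      rcases hf.2 e he.1.1 ⟨h2, h1⟩ with h | h
      · exact h
      · exact absurd h he.1.2
    · exact h
  · exact h

theorem quasi_primitive_H {W : Type*} [AddSemigroup W] (A : Set W)
    (hA : IsIdealSG A) (e : W) (he : e ∈ Pset A) :
    Hclass e = (WLset e ∩ WRset e) \ ⋃ f ∈ Pset A, ((WLset f ∩ WRset f) \ Hclass f) := by
  ext v
  constructor
  · rintro ⟨hvL, hvR⟩
    refine ⟨⟨hvL ▸ self_mem_WLset v, hvR ▸ self_mem_WRset v⟩, ?_⟩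
    simp only [Set.mem_iUnion, Set.mem_diff, Set.mem_inter_iff, not_exists]
    rintro f hf ⟨⟨hfL, hfR⟩, hnH⟩
    have hef : e = f := by
      refine primitive_eq he hf ?_ ?_
      · exact WLset_subset hfL (hvL ▸ self_mem_WLset e)
      · exact WRset_subset hfR (hvR ▸ self_mem_WRset e)
    exact hnH ⟨hef ▸ hvL, hef ▸ hvR⟩
  · rintro ⟨⟨hvL, hvR⟩, hU⟩
    by_contra hH
    exact hU (Set.mem_biUnion he ⟨⟨hvL, hvR⟩, hH⟩)
end

section
/- Let (W,+) be a semigroup. If A_fin(W) is a proper subset of A(W), then either P(A_fin(W)) = ∅, or there exists e ∈ A(W) such that P(A_fin(W)) = {e}. -/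
open Pointwise

theorem fin_quasi_primitives {W : Type*} [AddSemigroup W]
    (h : Afin W ⊂ AW W) :
    Pset (Afin W) = ∅ ∨ ∃ e ∈ AW W, Pset (Afin W) = {e} := by
  obtain ⟨α, hαAW, hαnA⟩ := Set.exists_of_ssubset h
  obtain ⟨⟨hαE, hαtot⟩, hαabs⟩ := hαAW
  -- every primitive element is in Ele α
  have key : ∀ e ∈ Pset (Afin W), e ∈ Ele α := by
    intro e ⟨⟨heE, henA⟩, hprim⟩
    by_contra hnot
    have habs := hαabs e hnot
    have : α = e ∨ α ∈ Afin W := hprim α hαE ⟨habs.1, habs.2⟩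
    rcases this with heq | hmem
    · exact hnot ⟨heE, by rw [ReesLE, ← heq]; exact ⟨hαE, hαE⟩⟩
    · exact hαnA hmem
  by_cases hP : Pset (Afin W) = ∅
  · exact Or.inl hP
  · obtain ⟨e, he⟩ := Set.nonempty_iff_ne_empty.mpr hP
    obtain ⟨⟨heE, henA⟩, hprim⟩ := he
    have heα : e ∈ Ele α := key e ⟨⟨heE, henA⟩, hprim⟩
    refine Or.inr ⟨e, ?_, ?_⟩
    · -- e ∈ AW W
      refine ⟨⟨heE, ?_⟩, ?_⟩
      · -- totality on Ele e, via Ele e ⊆ Ele α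
        have hsub : Ele e ⊆ Ele α := by
          intro f ⟨hfE, hfe⟩
          refine ⟨hfE, ?_, ?_⟩
          · calc α + f = α + (e + f) := by rw [hfe.1]
              _ = (α + e) + f := (add_assoc ..).symm
              _ = e + f := by rw [heα.2.1]
              _ = f := hfe.1
          · calc f + α = (f + e) + α := by rw [hfe.2]
              _ = f + (e + α) := add_assoc ..
              _ = f + e := by rw [heα.2.2]
              _ = f := hfe.2
        intro f hf g hg
        exact hαtot f (hsub hf) g (hsub hg)
      · -- absorption
        intro w hw
        by_cases hwα : w ∈ Ele α
        · rcases hαtot w hwα e heα with hle | hle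
          · exact absurd ⟨hwα.1, hle⟩ hw
          · exact hle
        · have habs := hαabs w hwα
          constructor
          · calc w + e = w + (α + e) := by rw [heα.2.1]
              _ = (w + α) + e := (add_assoc ..).symm
              _ = α + e := by rw [habs.1]
              _ = e := heα.2.1
          · calc e + w = (e + α) + w := by rw [heα.2.2]
              _ = e + (α + w) := add_assoc ..
              _ = e + α := by rw [habs.2]
              _ = e := heα.2.2
    · -- Pset = {e}
      ext f
      simp only [Set.mem_singleton_iff]
      constructor
      · intro hf
        obtain ⟨⟨hfE, hfnA⟩, hfprim⟩ := hf
        have hfα : f ∈ Ele α := key f ⟨⟨hfE, hfnA⟩, hfprim⟩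
        rcases hαtot f hfα e heα with hle | hle
        · rcases hprim f hfE hle with heq | hmem
          · exact heq
          · exact absurd hmem hfnA
        · rcases hfprim e heE hle with heq | hmem
          · exact heq.symm
          · exact absurd hmem henA
      · rintro rfl; exact ⟨⟨heE, henA⟩, hprim⟩
end

section
/- Let (W,+) be a commutative semigroup, A ⊆ W an ideal of (W,+), and e an idempotent of W with e ∉ A. Then the following statements are equivalent: (1) H(e) = W(e)\A; (2) W(e)\A with the operation + is a group (closed under +, with a two-sided identity and inverses); (3) W(e) is an A-minimal ideal of (W,+); (4) the subsemigroup (W(e),+) is (A ∩ W(e))-simple. -/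
open Pointwise

section Helpers
variable {W : Type*} [AddCommSemigroup W] {e : W}

lemma mem_WLset_iff {v x : W} : x ∈ WLset v ↔ (∃ w, w + v = x) ∨ x = v := by
  simp [WLset, Set.mem_add, or_comm]

lemma mem_WIset_iff (he : e + e = e) {x : W} : x ∈ WIset e ↔ ∃ w, w + e = x := by
  constructor
  · intro h
    rcases h with h | h
    · rcases Set.mem_add.mp h with ⟨l, hl, u, -, rfl⟩
      rcases mem_WLset_iff.mp hl with ⟨w, hw⟩ | hw
      · exact ⟨w + u, by rw [add_right_comm, hw]⟩
      · exact ⟨u, by rw [hw, add_comm]⟩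
    · rcases mem_WLset_iff.mp h with ⟨w, hw⟩ | hw
      · exact ⟨w, hw⟩
      · exact ⟨e, by rw [hw]; exact he⟩
  · rintro ⟨w, rfl⟩
    exact Or.inr (mem_WLset_iff.mpr (Or.inl ⟨w, rfl⟩))

lemma e_mem_WIset (he : e + e = e) : e ∈ WIset e := (mem_WIset_iff he).mpr ⟨e, he⟩

lemma e_add (he : e + e = e) {x : W} (hx : x ∈ WIset e) : e + x = x := by
  obtain ⟨w, rfl⟩ := (mem_WIset_iff he).mp hx
  rw [add_left_comm, he]

lemma add_mem_WIset (he : e + e = e) {x : W} (hx : x ∈ WIset e) (w : W) :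
    w + x ∈ WIset e := by
  obtain ⟨u, rfl⟩ := (mem_WIset_iff he).mp hx
  exact (mem_WIset_iff he).mpr ⟨w + u, add_assoc w u e⟩

lemma WRset_eq_WLset (v : W) : WRset v = WLset v := by
  unfold WRset WLset
  rw [add_comm]

variable {A : Set W}

lemma mem_Hclass_iff {v : W} : v ∈ Hclass e ↔ WLset e = WLset v := by
  simp [Hclass, WRset_eq_WLset]

lemma WLset_e (he : e + e = e) : WLset e = WIset e := by
  ext x
  rw [mem_WLset_iff, mem_WIset_iff he]
  constructor
  · rintro (⟨w, hw⟩ | hw)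
    · exact ⟨w, hw⟩
    · exact ⟨e, by rw [hw]; exact he⟩
  · exact Or.inl

lemma WIset_ideal (he : e + e = e) : IsIdealSG (WIset e) := by
  constructor
  · intro x hx
    rcases Set.mem_add.mp hx with ⟨w, -, y, hy, rfl⟩
    exact add_mem_WIset he hy w
  · intro x hx
    rcases Set.mem_add.mp hx with ⟨y, hy, w, -, rfl⟩
    exact add_comm y w ▸ add_mem_WIset he hy w

lemma Hclass_subset (he : e + e = e) (hA : IsIdealSG A) (heA : e ∉ A) :
    Hclass e ⊆ WIset e \ A := by
  intro v hv
  have hWL : WLset e = WLset v := mem_Hclass_iff.mp hv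
  have hvS : v ∈ WIset e := by
    rw [← WLset_e he, hWL]
    exact mem_WLset_iff.mpr (Or.inr rfl)
  refine ⟨hvS, fun hvA => heA ?_⟩
  have heWL : e ∈ WLset v := by
    rw [← hWL, WLset_e he]; exact e_mem_WIset he
  rcases mem_WLset_iff.mp heWL with ⟨w, hw⟩ | hw
  · exact hw ▸ hA.1 (Set.add_mem_add (Set.mem_univ w) hvA)
  · exact hw ▸ hvA

end Helpers

theorem A_minimal_ideals_char {W : Type*} [AddCommSemigroup W] (A : Set W)
    (hA : IsIdealSG A) (e : W) (he : e ∈ Eset W) (heA : e ∉ A) :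
    List.TFAE [Hclass e = WIset e \ A,
      IsGroupOn (WIset e \ A),
      IsMinimalIdealRel A (WIset e),
      IsSimpleRel (WIset e) (A ∩ WIset e)] := by
  have he' : e + e = e := he
  tfae_have 1 → 3
  · intro h1
    refine ⟨WIset_ideal he', fun hsub => heA (hsub (e_mem_WIset he')), ?_⟩
    intro E hE hEsub x hxE
    by_contra hxA
    rw [Set.ssubset_def] at hEsub
    have hxS : x ∈ WIset e := hEsub.1 hxE
    have hxH : x ∈ Hclass e := h1 ▸ (⟨hxS, hxA⟩ : x ∈ WIset e \ A)
    have hWL : WLset e = WLset x := mem_Hclass_iff.mp hxH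
    refine hEsub.2 (fun y hy => ?_)
    have hyx : y ∈ WLset x := by rw [← hWL, WLset_e he']; exact hy
    rcases mem_WLset_iff.mp hyx with ⟨w, hw⟩ | hw
    · exact hw ▸ hE.1 (Set.add_mem_add (Set.mem_univ w) hxE)
    · exact hw ▸ hxE
  tfae_have 3 → 2
  · rintro ⟨-, -, hmin⟩
    refine ⟨?_, e, ⟨e_mem_WIset he', heA⟩, ?_, ?_⟩
    · rintro a ⟨haS, haA⟩ b ⟨hbS, hbA⟩
      refine ⟨add_mem_WIset he' hbS a, fun hab => ?_⟩
      have hTid : IsIdealSG {x ∈ WIset e | a + x ∈ A} := by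
        constructor
        · intro x hx
          rcases Set.mem_add.mp hx with ⟨w, -, y, hy, rfl⟩
          exact ⟨add_mem_WIset he' hy.1 w,
            by rw [add_left_comm]; exact hA.1 (Set.add_mem_add (Set.mem_univ w) hy.2)⟩
        · intro x hx
          rcases Set.mem_add.mp hx with ⟨y, hy, w, -, rfl⟩
          exact ⟨add_comm y w ▸ add_mem_WIset he' hy.1 w,
            by rw [← add_assoc]; exact hA.2 (Set.add_mem_add hy.2 (Set.mem_univ w))⟩
      have hTsub : {x ∈ WIset e | a + x ∈ A} ⊂ WIset e := by
        rw [Set.ssubset_def]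
        refine ⟨fun x hx => hx.1, fun hS => haA ?_⟩
        have heT := hS (e_mem_WIset he')
        have hae : a + e = a := by rw [add_comm]; exact e_add he' haS
        exact hae ▸ heT.2
      exact hbA (hmin _ hTid hTsub ⟨hbS, hab⟩)
    · rintro a ⟨haS, -⟩
      exact ⟨by rw [add_comm]; exact e_add he' haS, e_add he' haS⟩
    · rintro a ⟨haS, haA⟩
      have hmem : ∀ x : W, x ∈ (Set.univ : Set W) + ({a} : Set W) ↔ ∃ w, w + a = x := by
        intro x; simp [Set.mem_add]
      have hEa : IsIdealSG ((Set.univ : Set W) + ({a} : Set W)) := by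
        constructor
        · intro x hx
          rcases Set.mem_add.mp hx with ⟨w, -, y, hy, rfl⟩
          obtain ⟨u, rfl⟩ := (hmem y).mp hy
          exact (hmem _).mpr ⟨w + u, add_assoc w u a⟩
        · intro x hx
          rcases Set.mem_add.mp hx with ⟨y, hy, w, -, rfl⟩
          obtain ⟨u, rfl⟩ := (hmem y).mp hy
          exact (hmem _).mpr ⟨u + w, (add_right_comm u a w).symm⟩
      have haEa : a ∈ (Set.univ : Set W) + ({a} : Set W) := (hmem a).mpr ⟨e, e_add he' haS⟩
      have hEaS : (Set.univ : Set W) + ({a} : Set W) ⊆ WIset e := by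
        intro x hx
        obtain ⟨w, rfl⟩ := (hmem x).mp hx
        exact add_mem_WIset he' haS w
      have hEq : (Set.univ : Set W) + ({a} : Set W) = WIset e := by
        by_contra hne
        exact haA (hmin _ hEa
          (Set.ssubset_def.mpr ⟨hEaS, fun h => hne (subset_antisymm hEaS h)⟩) haEa)
      obtain ⟨w, hw⟩ := (hmem e).mp (hEq ▸ e_mem_WIset he')
      have key : a + (e + w) = e := by
        rw [add_left_comm a e w, add_comm a w, hw, he']
      refine ⟨e + w, ⟨(mem_WIset_iff he').mpr ⟨w, add_comm w e⟩, fun hbA => heA ?_⟩, key, ?_⟩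
      · exact key ▸ hA.1 (Set.add_mem_add (Set.mem_univ a) hbA)
      · rw [add_comm]; exact key
  tfae_have 2 → 1
  · rintro ⟨-, ε, ⟨hεS, hεA⟩, hid, hinv⟩
    have hεe : ε = e := by
      have h1 : e + ε = e := (hid e ⟨e_mem_WIset he', heA⟩).1
      have h2 : e + ε = ε := e_add he' hεS
      rw [← h2, h1]
    rw [hεe] at hinv
    apply subset_antisymm (Hclass_subset he' hA heA)
    rintro v ⟨hvS, hvA⟩
    obtain ⟨b, ⟨hbS, hbA⟩, hvb, hbv⟩ := hinv v ⟨hvS, hvA⟩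
    refine mem_Hclass_iff.mpr (subset_antisymm ?_ ?_)
    · intro x hx
      have hxS : x ∈ WIset e := by rw [← WLset_e he']; exact hx
      refine mem_WLset_iff.mpr (Or.inl ⟨x + b, ?_⟩)
      rw [add_assoc, hbv, add_comm x e]
      exact e_add he' hxS
    · intro x hx
      rw [WLset_e he']
      rcases mem_WLset_iff.mp hx with ⟨w, hw⟩ | hw
      · exact hw ▸ add_mem_WIset he' hvS w
      · exact hw ▸ hvS
  tfae_have 3 → 4
  · rintro ⟨-, -, hmin⟩
    refine ⟨Set.ssubset_def.mpr
      ⟨Set.inter_subset_right, fun h => heA (h (e_mem_WIset he')).1⟩, ?_⟩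
    rintro D ⟨hDS, hSD, -⟩
    have hDid : IsIdealSG D := by
      have key : ∀ w : W, ∀ d ∈ D, w + d ∈ D := by
        intro w d hd
        have hdS : d ∈ WIset e := hDS hd
        have hwd : w + d = (w + e) + d := by rw [add_assoc, e_add he' hdS]
        rw [hwd]
        exact hSD (Set.add_mem_add ((mem_WIset_iff he').mpr ⟨w, rfl⟩) hd)
      constructor
      · intro x hx
        rcases Set.mem_add.mp hx with ⟨w, -, y, hy, rfl⟩
        exact key w y hy
      · intro x hx
        rcases Set.mem_add.mp hx with ⟨y, hy, w, -, rfl⟩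
        exact add_comm w y ▸ key w y hy
    by_cases hD : D = WIset e
    · exact Or.inl hD
    · refine Or.inr (fun x hx => ⟨?_, hDS hx⟩)
      exact hmin D hDid (Set.ssubset_def.mpr ⟨hDS, fun h => hD (subset_antisymm hDS h)⟩) hx
  tfae_have 4 → 3
  · rintro ⟨-, hD⟩
    refine ⟨WIset_ideal he', fun hsub => heA (hsub (e_mem_WIset he')), ?_⟩
    intro E hE hEsub
    rw [Set.ssubset_def] at hEsub
    have hIn : IsIdealIn (WIset e) E := by
      refine ⟨hEsub.1, ?_, ?_⟩
      · intro x hx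
        rcases Set.mem_add.mp hx with ⟨w, -, y, hy, rfl⟩
        exact hE.1 (Set.add_mem_add (Set.mem_univ w) hy)
      · intro x hx
        rcases Set.mem_add.mp hx with ⟨y, hy, w, -, rfl⟩
        exact hE.2 (Set.add_mem_add hy (Set.mem_univ w))
    rcases hD E hIn with hEq | hsubA
    · exact absurd hEq.symm.subset hEsub.2
    · exact hsubA.trans Set.inter_subset_left
  tfae_finish
end

section
/- Let d ≥ 1 be a natural number, C ⊆ ℝ^d a closed convex cone, and let A ∈ G(ℝ^d, C), i.e., A ⊆ ℝ^d with A = cl conv (A + C). Then A is idempotent with respect to the operation ⊕ (i.e., cl(A + A) = A) if and only if A = ∅ or A is a topologically closed convex cone with C ⊆ A. -/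
open Pointwise

theorem idempotent_in_G_iff {d : ℕ} (hd : 1 ≤ d) (C : Set (Fin d → ℝ))
    (hC_closed : IsClosed C)
    (hC_cone : ∀ s : ℝ, 0 < s → ∀ z ∈ C, s • z ∈ C)
    (hC_add : ∀ z₁ ∈ C, ∀ z₂ ∈ C, z₁ + z₂ ∈ C)
    (A : Set (Fin d → ℝ))
    (hA : A = closure (convexHull ℝ (A + C))) :
    closure (A + A) = A ↔
      A = ∅ ∨
        (IsClosed A ∧ (∀ s : ℝ, 0 < s → ∀ z ∈ A, s • z ∈ A) ∧
          (∀ z₁ ∈ A, ∀ z₂ ∈ A, z₁ + z₂ ∈ A) ∧ C ⊆ A) := by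
  have hclosed : IsClosed A := by rw [hA]; exact isClosed_closure
  have hconv : Convex ℝ A := by rw [hA]; exact (convex_convexHull ℝ _).closure
  have hAC : A + C ⊆ A := by
    intro x hx
    rw [hA]
    exact subset_closure (subset_convexHull ℝ _ hx)
  constructor
  · intro h
    rcases Set.eq_empty_or_nonempty A with hE | ⟨a0, ha0⟩
    · exact Or.inl hE
    right
    have hadd : ∀ z₁ ∈ A, ∀ z₂ ∈ A, z₁ + z₂ ∈ A := by
      intro x hx y hy
      rw [← h]
      exact subset_closure (Set.add_mem_add hx hy)
    have hhalf : ∀ a ∈ A, (2⁻¹ : ℝ) • a ∈ A := by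
      intro a ha
      have ha' : a ∈ closure (A + A) := by rw [h]; exact ha
      have h1 : (2⁻¹ : ℝ) • a ∈ (fun x => (2⁻¹ : ℝ) • x) '' closure (A + A) :=
        ⟨a, ha', rfl⟩
      have h2 := image_closure_subset_closure_image
        (continuous_const_smul (2⁻¹ : ℝ)) h1
      have h3 : (fun x => (2⁻¹ : ℝ) • x) '' (A + A) ⊆ A := by
        rintro _ ⟨z, ⟨x, hx, y, hy, rfl⟩, rfl⟩
        show (2⁻¹ : ℝ) • (x + y) ∈ A
        rw [smul_add]
        exact hconv hx hy (by norm_num) (by norm_num) (by norm_num)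
      have h4 := closure_mono h3 h2
      rwa [hclosed.closure_eq] at h4
    have hhalfpow : ∀ (n : ℕ) (a : Fin d → ℝ), a ∈ A → ((2⁻¹ : ℝ) ^ n) • a ∈ A := by
      intro n
      induction n with
      | zero => intro a ha; simpa using ha
      | succ k ih =>
        intro a ha
        have := hhalf _ (ih a ha)
        rwa [smul_smul, ← pow_succ'] at this
    have hnat : ∀ (n : ℕ), 1 ≤ n → ∀ a ∈ A, ((n : ℝ)) • a ∈ A := by
      intro n hn
      induction n with
      | zero => omega
      | succ k ih =>
        intro a ha
        rcases Nat.eq_or_lt_of_le hn with h1 | h1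
        · simpa [← h1] using ha
        · have hk : 1 ≤ k := by omega
          have h2 := hadd _ (ih hk a ha) _ ha
          rw [← one_smul ℝ a, smul_smul, mul_one, ← add_smul] at h2
          push_cast
          exact h2

    have hsmall : ∀ s : ℝ, 0 < s → s ≤ 1 → ∀ a ∈ A, s • a ∈ A := by
      intro s hs hs1 a ha
      obtain ⟨n, hn⟩ := exists_pow_lt_of_lt_one hs (by norm_num : (2⁻¹ : ℝ) < 1)
      set p : ℝ := (2⁻¹ : ℝ) ^ n with hp
      have hp0 : 0 < p := by positivity
      have hps : p < s := hn
      have hden : 0 < 1 - p := by linarith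
      set t : ℝ := (s - p) / (1 - p) with ht
      have ht0 : 0 ≤ t := div_nonneg (by linarith) (le_of_lt hden)
      have ht1 : t ≤ 1 := by
        rw [ht, div_le_one hden]; linarith
      have key := hconv (hhalfpow n a ha) ha (by linarith : (0:ℝ) ≤ 1 - t) ht0
        (by ring : (1 - t) + t = 1)
      rw [smul_smul, ← add_smul] at key
      have hst : (1 - t) * p + t = s := by
        rw [ht]
        field_simp
        ring
      rwa [hst] at key
    have hcone : ∀ s : ℝ, 0 < s → ∀ z ∈ A, s • z ∈ A := by
      intro s hs a ha
      rcases le_or_gt s 1 with h1 | h1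
      · exact hsmall s hs h1 a ha
      · obtain ⟨n, hn⟩ := exists_nat_ge s
        have hn1 : 1 ≤ n := by
          by_contra hcon
          push_neg at hcon
          have h0 : n = 0 := by omega
          subst h0
          simp at hn
          linarith
        have hnpos : (0:ℝ) < n := by exact_mod_cast Nat.pos_of_ne_zero (by omega)
        have h2 := hsmall (s / n) (by positivity) (by rw [div_le_one hnpos]; exact hn)
          _ (hnat n hn1 a ha)
        rwa [smul_smul, div_mul_cancel₀ _ (ne_of_gt hnpos)] at h2
    refine ⟨hclosed, hcone, hadd, ?_⟩
    intro c hc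
    have hiter : ∀ n : ℕ, a0 + ((n : ℝ) + 1) • c ∈ A := by
      intro n
      induction n with
      | zero => simpa using hAC (Set.add_mem_add ha0 hc)
      | succ k ih =>
        have h2 := hAC (Set.add_mem_add ih hc)
        have he : a0 + ((k : ℝ) + 1) • c + c = a0 + (((k + 1 : ℕ) : ℝ) + 1) • c := by
          push_cast
          module
        rwa [he] at h2
    have hmem : ∀ n : ℕ, ((n : ℝ) + 1)⁻¹ • a0 + c ∈ A := by
      intro n
      have hpos : (0:ℝ) < (n : ℝ) + 1 := by positivity
      have := hcone ((n : ℝ) + 1)⁻¹ (by positivity) _ (hiter n)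
      rwa [smul_add, smul_smul, inv_mul_cancel₀ (ne_of_gt hpos), one_smul] at this
    have htend : Filter.Tendsto (fun n : ℕ => ((n : ℝ) + 1)⁻¹ • a0 + c)
        Filter.atTop (nhds c) := by
      have h0 : Filter.Tendsto (fun n : ℕ => ((n : ℝ) + 1)⁻¹) Filter.atTop (nhds 0) := by
        simpa [one_div] using (tendsto_one_div_add_atTop_nhds_zero_nat :
          Filter.Tendsto (fun n : ℕ => 1 / ((n : ℝ) + 1)) Filter.atTop (nhds 0))
      have := (h0.smul_const a0).add_const c
      simpa using this
    exact hclosed.mem_of_tendsto htend (Filter.Eventually.of_forall hmem)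
  · rintro (hE | ⟨hcl, hcone, hadd, hCA⟩)
    · simp [hE]
    · apply subset_antisymm
      · have hsub : A + A ⊆ A := by
          rintro _ ⟨x, hx, y, hy, rfl⟩
          exact hadd x hx y hy
        calc closure (A + A) ⊆ closure A := closure_mono hsub
          _ = A := hcl.closure_eq
      · intro a ha
        have h1 : (2⁻¹ : ℝ) • a ∈ A := hcone _ (by norm_num) a ha
        have h2 := Set.add_mem_add h1 h1
        have he : (2⁻¹ : ℝ) • a + (2⁻¹ : ℝ) • a = a := by
          rw [← add_smul]
          norm_num
        rw [he] at h2
        exact subset_closure h2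
end
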